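/- Let C ⊆ F₂ = ⟨a,b⟩ be the set consisting of a^{±1}, a^{±2}, b^{±1}, (ab⁻¹a⁻¹b⁻¹)^{±1}, and (ab^n)^{±1}, (a⁻¹b^n)^{±1}, (ab^n a b^n)^{±1}, (a⁻¹b^n a⁻¹ b^n)^{±1} for all n ∈ ℤ. Let t_b be the automorphism a ↦ ab, b ↦ b. Then for every c ∈ C, t_b(c) is conjugate in F₂ to an element of C. -/
import Mathlib


/-- `a` and `b`, the generators of `F₂ = FreeGroup (Fin 2)`. -/
def a : FreeGroup (Fin 2) := FreeGroup.of 0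
def b : FreeGroup (Fin 2) := FreeGroup.of 1

/-- The class `C` of words representing simple closed curves on the punctured Klein
bottle, closed under inversion: `a^{±1}, a^{±2}, b^{±1}, (ab⁻¹a⁻¹b⁻¹)^{±1}`, and
`(abⁿ)^{±1}, (a⁻¹bⁿ)^{±1}, (abⁿabⁿ)^{±1}, (a⁻¹bⁿa⁻¹bⁿ)^{±1}` for `n ∈ ℤ`. -/
def C : Set (FreeGroup (Fin 2)) :=
  {w | w = a ∨ w = a⁻¹ ∨ w = a ^ 2 ∨ w = (a ^ 2)⁻¹ ∨ w = b ∨ w = b⁻¹ ∨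
    w = a * b⁻¹ * a⁻¹ * b⁻¹ ∨ w = (a * b⁻¹ * a⁻¹ * b⁻¹)⁻¹ ∨
    (∃ n : ℤ,
      w = a * b ^ n ∨ w = (a * b ^ n)⁻¹ ∨
      w = a⁻¹ * b ^ n ∨ w = (a⁻¹ * b ^ n)⁻¹ ∨
      w = a * b ^ n * a * b ^ n ∨ w = (a * b ^ n * a * b ^ n)⁻¹ ∨
      w = a⁻¹ * b ^ n * a⁻¹ * b ^ n ∨ w = (a⁻¹ * b ^ n * a⁻¹ * b ^ n)⁻¹)}

lemma memE {w : FreeGroup (Fin 2)} (n : ℤ) (h : w = a * b ^ n ∨ w = (a * b ^ n)⁻¹ ∨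
      w = a⁻¹ * b ^ n ∨ w = (a⁻¹ * b ^ n)⁻¹ ∨
      w = a * b ^ n * a * b ^ n ∨ w = (a * b ^ n * a * b ^ n)⁻¹ ∨
      w = a⁻¹ * b ^ n * a⁻¹ * b ^ n ∨ w = (a⁻¹ * b ^ n * a⁻¹ * b ^ n)⁻¹) : w ∈ C :=
  .inr <| .inr <| .inr <| .inr <| .inr <| .inr <| .inr <| .inr ⟨n, h⟩

/-- The Dehn twist `t_b : a ↦ ab, b ↦ b` preserves the class `C` up to conjugacy. -/
theorem stmt_15 (tb : FreeGroup (Fin 2) →* FreeGroup (Fin 2))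
    (ha : tb a = a * b) (hb : tb b = b) :
    ∀ c ∈ C, ∃ c' ∈ C, IsConj c' (tb c) := by
  rintro c (rfl | rfl | rfl | rfl | rfl | rfl | rfl | rfl |
    ⟨n, rfl | rfl | rfl | rfl | rfl | rfl | rfl | rfl⟩) <;>
    simp only [map_mul, map_inv, map_pow, map_zpow, ha, hb]
  · exact ⟨a * b ^ (1:ℤ), memE 1 (.inl rfl), isConj_iff.mpr ⟨1, by group⟩⟩
  · exact ⟨(a * b ^ (1:ℤ))⁻¹, memE 1 (.inr <| .inl rfl), isConj_iff.mpr ⟨1, by group⟩⟩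
  · exact ⟨a * b ^ (1:ℤ) * a * b ^ (1:ℤ),
      memE 1 (.inr <| .inr <| .inr <| .inr <| .inl rfl), isConj_iff.mpr ⟨1, by rw [sq]; group⟩⟩
  · exact ⟨(a * b ^ (1:ℤ) * a * b ^ (1:ℤ))⁻¹,
      memE 1 (.inr <| .inr <| .inr <| .inr <| .inr <| .inl rfl), isConj_iff.mpr ⟨1, by rw [sq]; group⟩⟩
  · exact ⟨b, .inr <| .inr <| .inr <| .inr <| .inl rfl, isConj_iff.mpr ⟨1, by group⟩⟩
  · exact ⟨b⁻¹, .inr <| .inr <| .inr <| .inr <| .inr <| .inl rfl, isConj_iff.mpr ⟨1, by group⟩⟩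
  · exact ⟨a * b⁻¹ * a⁻¹ * b⁻¹, .inr <| .inr <| .inr <| .inr <| .inr <| .inr <| .inl rfl,
      isConj_iff.mpr ⟨1, by group⟩⟩
  · exact ⟨(a * b⁻¹ * a⁻¹ * b⁻¹)⁻¹,
      .inr <| .inr <| .inr <| .inr <| .inr <| .inr <| .inr <| .inl rfl,
      isConj_iff.mpr ⟨1, by group⟩⟩
  · exact ⟨a * b ^ (n + 1), memE (n + 1) (.inl rfl), isConj_iff.mpr ⟨1, by group⟩⟩
  · exact ⟨(a * b ^ (n + 1))⁻¹, memE (n + 1) (.inr <| .inl rfl), isConj_iff.mpr ⟨1, by group⟩⟩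
  · exact ⟨a⁻¹ * b ^ (n - 1), memE (n - 1) (.inr <| .inr <| .inl rfl),
      isConj_iff.mpr ⟨b⁻¹, by group⟩⟩
  · exact ⟨(a⁻¹ * b ^ (n - 1))⁻¹, memE (n - 1) (.inr <| .inr <| .inr <| .inl rfl),
      isConj_iff.mpr ⟨b⁻¹, by group⟩⟩
  · exact ⟨a * b ^ (n + 1) * a * b ^ (n + 1),
      memE (n + 1) (.inr <| .inr <| .inr <| .inr <| .inl rfl), isConj_iff.mpr ⟨1, by group⟩⟩
  · exact ⟨(a * b ^ (n + 1) * a * b ^ (n + 1))⁻¹,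
      memE (n + 1) (.inr <| .inr <| .inr <| .inr <| .inr <| .inl rfl),
      isConj_iff.mpr ⟨1, by group⟩⟩
  · exact ⟨a⁻¹ * b ^ (n - 1) * a⁻¹ * b ^ (n - 1),
      memE (n - 1) (.inr <| .inr <| .inr <| .inr <| .inr <| .inr <| .inl rfl),
      isConj_iff.mpr ⟨b⁻¹, by group⟩⟩
  · exact ⟨(a⁻¹ * b ^ (n - 1) * a⁻¹ * b ^ (n - 1))⁻¹,
      memE (n - 1) (.inr <| .inr <| .inr <| .inr <| .inr <| .inr <| .inr rfl),
      isConj_iff.mpr ⟨b⁻¹, by group⟩⟩
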